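/- Let U : D × [-∞,∞] → [-∞,∞] be such that for each s, x ↦ U(s,x) is non-decreasing and right-continuous, and for each x ∈ ℝ ∪ {∞}, s ↦ U(s,x) is upper semicontinuous. If z_n hypo-converges to z in USC(D) and s_n → s in D, then limsup_{n→∞} U(s_n, z_n(s_n)) ≤ U(s, z(s)). -/

import Mathlib

open Set Filter Topology

lemma limsup_usc_aux {α : Type*} [TopologicalSpace α] {f : α → EReal}
    (hf : UpperSemicontinuous f) {s : α} {sn : ℕ → α}
    (h : Tendsto sn atTop (𝓝 s)) :
    limsup (fun n => f (sn n)) atTop ≤ f s := by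
  refine le_of_forall_gt_imp_ge_of_dense fun b hb => ?_
  have hev : ∀ᶠ n in atTop, f (sn n) < b := h.eventually (hf s b hb)
  exact limsup_le_of_le (by isBoundedDefault) (hev.mono fun n hn => hn.le)

/-- Proposition 3.2(i): let `U ∈ 𝒰(D)`, i.e. `x ↦ U(s,x)` is non-decreasing and
right-continuous for each `s`, and `s ↦ U(s,x)` is upper semicontinuous for each
`x ∈ ℝ ∪ {∞}`. If `z_n` hypo-converges to `z` in `USC(D)` and `s_n → s` in `D`, then
`limsup_n U(s_n, z_n(s_n)) ≤ U(s, z(s))`. -/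
theorem stmt_7 {N : ℕ} (D : Set (EuclideanSpace ℝ (Fin N))) (hne : D.Nonempty)
    (hlc : LocallyCompactSpace D)
    (U : D → EReal → EReal)
    (hU1 : ∀ s : D, Monotone (U s))
    (hU2 : ∀ s : D, ∀ x : EReal, ContinuousWithinAt (U s) (Ici x) x)
    (hU3 : ∀ x : EReal, x ≠ ⊥ → UpperSemicontinuous (fun s => U s x))
    (zn : ℕ → D → EReal) (z : D → EReal)
    (hzn : ∀ n, UpperSemicontinuous (zn n)) (hz : UpperSemicontinuous z)
    (hhypo1 : ∀ s : D, ∀ sn : ℕ → D, Tendsto sn atTop (𝓝 s) →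
      limsup (fun n => zn n (sn n)) atTop ≤ z s)
    (hhypo2 : ∀ s : D, ∃ sn : ℕ → D, Tendsto sn atTop (𝓝 s) ∧
      z s ≤ liminf (fun n => zn n (sn n)) atTop)
    (s : D) (sn : ℕ → D) (hsn : Tendsto sn atTop (𝓝 s)) :
    limsup (fun n => U (sn n) (zn n (sn n))) atTop ≤ U s (z s) := by
  by_cases htop : z s = ⊤
  · calc limsup (fun n => U (sn n) (zn n (sn n))) atTop
        ≤ limsup (fun n => U (sn n) ⊤) atTop :=
          limsup_le_limsup (Eventually.of_forall fun n => hU1 (sn n) le_top)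
      _ ≤ U s ⊤ := limsup_usc_aux (hU3 ⊤ (by simp)) hsn
      _ = U s (z s) := by rw [htop]
  · refine le_of_forall_gt_imp_ge_of_dense fun b hb => ?_
    -- right-continuity: find x > z s with U s x < b
    have hcont : Tendsto (U s) (𝓝[Ici (z s)] (z s)) (𝓝 (U s (z s))) := hU2 s (z s)
    have hev : ∀ᶠ x in 𝓝[Ici (z s)] (z s), U s x < b := hcont (Iio_mem_nhds hb)
    have hev' : ∀ᶠ x in 𝓝[>] (z s), U s x < b :=
      hev.filter_mono (nhdsWithin_mono _ Ioi_subset_Ici_self)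
    have hne' : (Ioi (z s)).Nonempty := ⟨⊤, lt_top_iff_ne_top.2 htop⟩
    have : NeBot (𝓝[>] (z s)) := nhdsGT_neBot_of_exists_gt hne'
    obtain ⟨x, hxmem, hxb⟩ := (hev'.and self_mem_nhdsWithin).exists
    -- hxmem : U s x < b, hxb : x ∈ Ioi (z s)
    have hxbot : x ≠ ⊥ := (bot_le.trans_lt hxb).ne'
    have hlim : limsup (fun n => zn n (sn n)) atTop < x :=
      lt_of_le_of_lt (hhypo1 s sn hsn) hxb
    have hev1 : ∀ᶠ n in atTop, zn n (sn n) < x :=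
      eventually_lt_of_limsup_lt hlim
    have hev2 : ∀ᶠ n in atTop, U (sn n) x < b :=
      hsn.eventually (hU3 x hxbot s b hxmem)
    have hev3 : ∀ᶠ n in atTop, U (sn n) (zn n (sn n)) ≤ b := by
      filter_upwards [hev1, hev2] with n h1 h2
      exact le_trans (hU1 (sn n) h1.le) h2.le
    exact limsup_le_of_le (by isBoundedDefault) hev3
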